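/- Let R be a commutative ring, let F and G be covariant functors from the category of commutative R-algebras to sets, and let φ : F → G be a natural transformation. Assume: (i) G is represented by the polynomial algebra R[x_1, …, x_n], i.e. G is naturally isomorphic to S ↦ Hom_{R-alg}(R[x_1, …, x_n], S); and (ii) for every commutative R-algebra S and every element ξ ∈ G(S), the functor F_{φ,ξ} from commutative S-algebras to sets defined by T ↦ {η ∈ F(T) : φ_T(η) = G(ι_T)(ξ)}, where ι_T : S → T is the structure homomorphism, is represented by the polynomial algebra S[y_1, …, y_m]. Then F is represented by the polynomial algebra R[x_1, …, x_n, y_1, …, y_m]. -/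
import Mathlib


universe u

/-- A (covariant, set-valued) functor on the category of commutative `R`-algebras. -/
structure AlgebraFunctor (R : Type u) [CommRing R] : Type (u + 1) where
  obj : (S : Type u) → [CommRing S] → [Algebra R S] → Type u
  map : {S T : Type u} → [CommRing S] → [Algebra R S] → [CommRing T] → [Algebra R T] →
    (S →ₐ[R] T) → obj S → obj T
  map_id : ∀ (S : Type u) [CommRing S] [Algebra R S], map (AlgHom.id R S) = id
  map_comp : ∀ {S T U : Type u} [CommRing S] [Algebra R S] [CommRing T] [Algebra R T]
    [CommRing U] [Algebra R U] (f : S →ₐ[R] T) (g : T →ₐ[R] U),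
    map (g.comp f) = map g ∘ map f

/-- The functor `F` is represented by the commutative `R`-algebra `A`, i.e. `F` is
naturally isomorphic to `S ↦ Hom_{R-alg}(A, S)`. -/
def AlgebraFunctor.RepresentedBy {R : Type u} [CommRing R] (F : AlgebraFunctor R)
    (A : Type u) [CommRing A] [Algebra R A] : Prop :=
  ∃ e : (S : Type u) → [CommRing S] → [Algebra R S] → F.obj S ≃ (A →ₐ[R] S),
    ∀ (S T : Type u) [CommRing S] [Algebra R S] [CommRing T] [Algebra R T]
      (f : S →ₐ[R] T) (x : F.obj S), e T (F.map f x) = f.comp (e S x)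

theorem AlgebraFunctor.representedBy_of_universal {R : Type u} [CommRing R]
    (F : AlgebraFunctor R) (C : Type u) [CommRing C] [Algebra R C] (u : F.obj C)
    (hu : ∀ (T : Type u) [CommRing T] [Algebra R T] (η : F.obj T),
      ∃! f : C →ₐ[R] T, F.map f u = η) :
    F.RepresentedBy C := by
  have bij : ∀ (T : Type u) [CommRing T] [Algebra R T],
      Function.Bijective (fun f : C →ₐ[R] T => F.map f u) := by
    intro T _ _
    refine ⟨fun f g hfg => ?_, fun η => ⟨(hu T η).exists.choose, (hu T η).exists.choose_spec⟩⟩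
    exact ((hu T (F.map g u)).unique hfg rfl)
  refine ⟨fun T _ _ => (Equiv.ofBijective _ (bij T)).symm, ?_⟩
  intro S T _ _ _ _ f x
  apply (bij T).1
  show F.map _ u = F.map _ u
  rw [F.map_comp]
  simp only [Function.comp_apply]
  exact (Equiv.ofBijective_apply_symm_apply _ (bij T) _).trans
    (congrArg (F.map f) (Equiv.ofBijective_apply_symm_apply _ (bij S) _)).symm

theorem AlgebraFunctor.universal_transfer {R : Type u} [CommRing R] (F : AlgebraFunctor R)
    {B C : Type u} [CommRing B] [Algebra R B] [CommRing C] [Algebra R C]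
    (ψ : C ≃ₐ[R] B) (u : F.obj B)
    (hu : ∀ (T : Type u) [CommRing T] [Algebra R T] (η : F.obj T),
      ∃! k : B →ₐ[R] T, F.map k u = η) :
    ∀ (T : Type u) [CommRing T] [Algebra R T] (η : F.obj T),
      ∃! f : C →ₐ[R] T, F.map f (F.map (ψ.symm : B →ₐ[R] C) u) = η := by
  intro T _ _ η
  obtain ⟨k, hk, hkuniq⟩ := hu T η
  have comp_eval : ∀ (f : C →ₐ[R] T),
      F.map f (F.map (ψ.symm : B →ₐ[R] C) u) = F.map (f.comp (ψ.symm : B →ₐ[R] C)) u := by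
    intro f
    rw [F.map_comp]
    rfl
  refine ⟨k.comp (ψ : C →ₐ[R] B), ?_, ?_⟩
  · show F.map (k.comp (ψ : C →ₐ[R] B)) (F.map (ψ.symm : B →ₐ[R] C) u) = η
    rw [comp_eval]
    have h5 : (k.comp (ψ : C →ₐ[R] B)).comp (ψ.symm : B →ₐ[R] C) = k :=
      AlgHom.ext fun b => by simp
    rw [h5, hk]
  · intro f hf
    replace hf : F.map f (F.map (ψ.symm : B →ₐ[R] C) u) = η := hf
    rw [comp_eval] at hf
    have h6 := hkuniq _ hf
    rw [← h6]
    exact AlgHom.ext fun x => by simp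

/-- Let `φ : F → G` be a natural transformation of set-valued
functors on commutative `R`-algebras such that (i) `G` is represented by the
polynomial algebra `R[x_1, …, x_n]`, and (ii) for every commutative `R`-algebra
`S` and every `ξ ∈ G(S)`, the fiber functor `F_{φ,ξ} : T ↦ {η ∈ F(T) : φ_T(η) =
G(ι_T)(ξ)}` on commutative `S`-algebras is represented by the polynomial algebra
`S[y_1, …, y_m]`.  Then `F` is represented by `R[x_1, …, x_n, y_1, …, y_m]`. -/
theorem statement_19 (R : Type u) [CommRing R] (F G : AlgebraFunctor R)
    -- `φ` is a natural transformation `F → G`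
    (φ : (S : Type u) → [CommRing S] → [Algebra R S] → F.obj S → G.obj S)
    (hφ : ∀ (S T : Type u) [CommRing S] [Algebra R S] [CommRing T] [Algebra R T]
      (f : S →ₐ[R] T) (x : F.obj S), φ T (F.map f x) = G.map f (φ S x))
    (n m : ℕ)
    -- (i) `G` is represented by `R[x_1, …, x_n]`
    (hG : G.RepresentedBy (MvPolynomial (Fin n) R))
    -- (ii) each fiber functor `F_{φ,ξ}` is represented by `S[y_1, …, y_m]`
    (hii : ∀ (S : Type u) [CommRing S] [Algebra R S] (ξ : G.obj S),
      ∃ e : (T : Type u) → [CommRing T] → [Algebra R T] → [Algebra S T] →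
          [IsScalarTower R S T] →
          {η : F.obj T // φ T η = G.map (IsScalarTower.toAlgHom R S T) ξ} ≃
            (MvPolynomial (Fin m) S →ₐ[S] T),
        ∀ (T T' : Type u) [CommRing T] [Algebra R T] [Algebra S T] [IsScalarTower R S T]
          [CommRing T'] [Algebra R T'] [Algebra S T'] [IsScalarTower R S T']
          (f : T →ₐ[S] T') (p : MvPolynomial (Fin m) S →ₐ[S] T),
          ((e T').symm (f.comp p)).1 =
            F.map (AlgHom.restrictScalars R f) (((e T).symm p).1)) :
    F.RepresentedBy (MvPolynomial (Fin (n + m)) R) := by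
  classical
  obtain ⟨eG, heG⟩ := hG
  set A := MvPolynomial (Fin n) R with hA
  let ξ₀ : G.obj A := (eG A).symm (AlgHom.id R A)
  obtain ⟨e, he⟩ := hii A ξ₀
  set B := MvPolynomial (Fin m) A with hB
  let uhat : {η : F.obj B // φ B η = G.map (IsScalarTower.toAlgHom R A B) ξ₀} :=
    (e B).symm (AlgHom.id A B)
  let u : F.obj B := uhat.1
  have key : eG B (φ B u) = (IsScalarTower.toAlgHom R A B : A →ₐ[R] B) := by
    rw [show φ B u = G.map (IsScalarTower.toAlgHom R A B) ξ₀ from uhat.2,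
      heG A B _ ξ₀, show eG A ξ₀ = AlgHom.id R A from (eG A).apply_symm_apply _,
      AlgHom.comp_id]
  have huniv : ∀ (T : Type u) [CommRing T] [Algebra R T] (η : F.obj T),
      ∃! k : B →ₐ[R] T, F.map k u = η := by
    intro T _ _ η
    set g : A →ₐ[R] T := eG T (φ T η) with hg
    letI : Algebra A T := g.toRingHom.toAlgebra
    haveI : IsScalarTower R A T :=
      IsScalarTower.of_algebraMap_eq' (RingHom.ext fun r => (g.commutes r).symm)
    have hιg : (IsScalarTower.toAlgHom R A T : A →ₐ[R] T) = g := AlgHom.ext fun a => rfl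
    have mem : φ T η = G.map (IsScalarTower.toAlgHom R A T) ξ₀ := by
      apply (eG T).injective
      rw [heG A T _ ξ₀, show eG A ξ₀ = AlgHom.id R A from (eG A).apply_symm_apply _,
        AlgHom.comp_id, hιg, ← hg]
    set ηhat : {η' : F.obj T // φ T η' = G.map (IsScalarTower.toAlgHom R A T) ξ₀} :=
      ⟨η, mem⟩ with hηhat
    set h : MvPolynomial (Fin m) A →ₐ[A] T := e T ηhat with hh
    have hex : F.map (AlgHom.restrictScalars R h) u = η := by
      have h1 := he B T h (AlgHom.id A B)
      rw [AlgHom.comp_id] at h1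
      rw [hh, Equiv.symm_apply_apply] at h1
      exact h1.symm
    refine ⟨AlgHom.restrictScalars R h, hex, ?_⟩
    intro k₂ hk₂
    have hg2 : k₂.comp (IsScalarTower.toAlgHom R A B : A →ₐ[R] B) = g := by
      rw [hg, ← hk₂, hφ B T k₂ u, heG B T k₂ (φ B u), key]
    let k₂' : B →ₐ[A] T :=
      { toRingHom := k₂.toRingHom,
        commutes' := fun a => AlgHom.congr_fun hg2 a }
    have h2 := he B T k₂' (AlgHom.id A B)
    rw [AlgHom.comp_id] at h2
    have hrs : AlgHom.restrictScalars R k₂' = k₂ := rfl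
    rw [hrs, hk₂] at h2
    have h3 : (e T).symm k₂' = ηhat := Subtype.ext h2
    have h4 : k₂' = h := by rw [hh, ← h3, Equiv.apply_symm_apply]
    rw [← hrs, h4]
  let psi : MvPolynomial (Fin (n + m)) R ≃ₐ[R] B :=
    (MvPolynomial.renameEquiv R
      ((finSumFinEquiv (m := n) (n := m)).symm.trans (Equiv.sumComm _ _))).trans
      (MvPolynomial.sumAlgEquiv R (Fin m) (Fin n))
  exact F.representedBy_of_universal _ (F.map (psi.symm : B →ₐ[R] _) u)
    (F.universal_transfer psi u huniv)
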